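/- Let V and V' be realizations of M, let W and W' be normal matrices for V and V' respectively, and let S = Vᵀ * W and S' = V'ᵀ * W' be the corresponding slack matrices. Then V and V' are linearly equivalent (that is, V' = A * V for some invertible matrix A : Matrix (Fin (d+1)) (Fin (d+1)) k) if and only if there exists an invertible diagonal matrix D_h : Matrix (Fin h) (Fin h) k such that S' = S * D_h. -/

import Mathlib

open Classical Matrix MvPolynomial

/-- `V` is a realization of the matroid `M`: a set `I` is independent in `M` iff the
columns of `V` indexed by `I` are linearly independent over `k`. -/
def IsRealization {k : Type*} [Field k] {n d : ℕ} (M : Matroid (Fin n))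
    (V : Matrix (Fin (d + 1)) (Fin n) k) : Prop :=
  ∀ I : Set (Fin n), M.Indep I ↔ LinearIndependent k (fun i : I => Vᵀ (i : Fin n))

/-- `F` is a hyperplane of `M`: a flat of `M` of rank `d`. -/
def IsHyperplane {n : ℕ} (M : Matroid (Fin n)) (d : ℕ) (F : Set (Fin n)) : Prop :=
  M.IsFlat F ∧ ∃ I, M.IsBasis I F ∧ I.ncard = d

/-- `H` is a bijection onto the set of hyperplanes of `M`. -/
def HypEnum {n h : ℕ} (M : Matroid (Fin n)) (d : ℕ) (H : Fin h → Set (Fin n)) : Prop :=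
  Function.Injective H ∧ ∀ F : Set (Fin n), (∃ j, H j = F) ↔ IsHyperplane M d F

/-- `M` has rank `r` : some base of `M` has cardinality `r`. -/
def HasRank {n : ℕ} (M : Matroid (Fin n)) (r : ℕ) : Prop :=
  ∃ B, M.IsBase B ∧ B.ncard = r

/-- `W` is a normal matrix for the realization `V`: the dot product of column `j` of `W`
with column `i` of `V` is zero iff `i ∈ H j`. -/
def IsNormalMatrix {k : Type*} [Field k] {n d h : ℕ} (H : Fin h → Set (Fin n))
    (V : Matrix (Fin (d + 1)) (Fin n) k) (W : Matrix (Fin (d + 1)) (Fin h) k) : Prop :=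
  ∀ i j, (∑ r : Fin (d + 1), W r j * V r i) = 0 ↔ i ∈ H j

/-- Projective equivalence of realizations. -/
def ProjEquiv {k : Type*} [Field k] {n d : ℕ}
    (V V' : Matrix (Fin (d + 1)) (Fin n) k) : Prop :=
  ∃ (A : Matrix (Fin (d + 1)) (Fin (d + 1)) k) (b : Fin n → kˣ),
    IsUnit A ∧ V' = A * V * Matrix.diagonal (fun i => (b i : k))

/-- The index type of slack variables: pairs `(i, j)` with `i ∉ H j`. -/
abbrev SlackVar {n h : ℕ} (H : Fin h → Set (Fin n)) : Type :=
  {p : Fin n × Fin h // p.1 ∉ H p.2}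

/-- The symbolic slack matrix of `M`. -/
noncomputable def symbSlack {n h : ℕ} (H : Fin h → Set (Fin n)) (k : Type*) [Field k] :
    Matrix (Fin n) (Fin h) (MvPolynomial (SlackVar H) k) :=
  fun i j => if hij : i ∈ H j then 0 else X ⟨(i, j), hij⟩

/-- The ideal `J` generated by the `(d+2)`-minors of the symbolic slack matrix. -/
noncomputable def minorIdeal {n h : ℕ} (d : ℕ) (H : Fin h → Set (Fin n)) (k : Type*)
    [Field k] : Ideal (MvPolynomial (SlackVar H) k) :=
  Ideal.span { f | ∃ (r : Fin (d + 2) → Fin n) (c : Fin (d + 2) → Fin h),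
    Function.Injective r ∧ Function.Injective c ∧
      f = ((symbSlack H k).submatrix r c).det }

/-- The product `P` of all slack variables. -/
noncomputable def allVarsProd {n h : ℕ} (H : Fin h → Set (Fin n)) (k : Type*) [Field k] :
    MvPolynomial (SlackVar H) k :=
  ∏ e : SlackVar H, X e

/-- The slack ideal `I_M` : the saturation of `J` at `P`, as a set. -/
noncomputable def slackSet {n h : ℕ} (d : ℕ) (H : Fin h → Set (Fin n)) (k : Type*) [Field k] :
    Set (MvPolynomial (SlackVar H) k) :=
  {f | ∃ N : ℕ, allVarsProd H k ^ N * f ∈ minorIdeal d H k}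

/-- The matrix `S(s)` obtained by evaluating the symbolic slack matrix at `s`. -/
noncomputable def slackEval {k : Type*} [Field k] {n h : ℕ} (H : Fin h → Set (Fin n))
    (s : SlackVar H → k) : Matrix (Fin n) (Fin h) k :=
  fun i j => if hij : i ∈ H j then 0 else s ⟨(i, j), hij⟩

/-- Cyclic successor in `Fin m`. -/
def cycSucc {m : ℕ} (i : Fin m) : Fin m := ⟨(i.val + 1) % m, Nat.mod_lt _ i.pos⟩

/-- The cycle ideal `C_S` of a slack matrix `S`. -/
noncomputable def cycleIdeal {k : Type*} [Field k] {n h : ℕ} (H : Fin h → Set (Fin n))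
    (S : Matrix (Fin n) (Fin h) k) : Ideal (MvPolynomial (SlackVar H) k) :=
  Ideal.span { f | ∃ (m : ℕ) (_ : 2 ≤ m) (a : Fin m → Fin n) (b : Fin m → Fin h)
    (_ : Function.Injective a) (_ : Function.Injective b)
    (h1 : ∀ i, a i ∉ H (b i)) (h2 : ∀ i, a (cycSucc i) ∉ H (b i)),
    f = C (∏ i, S (a (cycSucc i)) (b i)) * ∏ i, X ⟨(a i, b i), h1 i⟩
      - C (∏ i, S (a i) (b i)) * ∏ i, X ⟨(a (cycSucc i), b i), h2 i⟩ }

section Helpers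

variable {k : Type*} [Field k]

/-- Pairings against a linearly independent (hence spanning) family of `m+1` vectors in
`k^{m+1}` determine a vector. -/
lemma pair_ext {m : ℕ} {b : Fin (m + 1) → (Fin (m + 1) → k)}
    (hb : LinearIndependent k b) {x y : Fin (m + 1) → k}
    (hxy : ∀ s, x ⬝ᵥ b s = y ⬝ᵥ b s) : x = y := by
  have hspan : Submodule.span k (Set.range b) = ⊤ :=
    hb.span_eq_top_of_card_eq_finrank (by simp [Module.finrank_pi])
  have key : ∀ z : Fin (m + 1) → k, x ⬝ᵥ z = y ⬝ᵥ z := by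
    intro z
    have hz : z ∈ Submodule.span k (Set.range b) := by rw [hspan]; trivial
    induction hz using Submodule.span_induction with
    | mem w hw => obtain ⟨s, rfl⟩ := hw; exact hxy s
    | zero => simp
    | add w₁ w₂ _ _ h1 h2 => simp [dotProduct_add, h1, h2]
    | smul a w _ hw => simp [dotProduct_smul, hw]
  funext r
  have := key (Pi.single r 1)
  simpa [dotProduct_single] using this

/-- A square family of vectors admitting a "dual" family is linearly independent. -/
lemma rows_indep {m : ℕ} {N v : Fin m → (Fin m → k)}
    (h0 : ∀ s s', s ≠ s' → N s ⬝ᵥ v s' = 0)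
    (h1 : ∀ s, N s ⬝ᵥ v s ≠ 0) : LinearIndependent k N := by
  rw [Fintype.linearIndependent_iff]
  intro g hg s
  have expand : (∑ i, g i • N i) ⬝ᵥ v s = ∑ i, g i * (N i ⬝ᵥ v s) := by
    simp only [dotProduct, Finset.sum_apply, Pi.smul_apply, smul_eq_mul, Finset.sum_mul,
      Finset.mul_sum, mul_assoc]
    rw [Finset.sum_comm]
  rw [hg, zero_dotProduct] at expand
  have hsum : ∑ i, g i * (N i ⬝ᵥ v s) = g s * (N s ⬝ᵥ v s) := by
    refine Finset.sum_eq_single s (fun i _ hi => ?_) (by simp)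
    rw [h0 i s hi, mul_zero]
  rw [hsum] at expand
  exact by
    rcases mul_eq_zero.mp expand.symm with h | h
    · exact h
    · exact absurd h (h1 s)

/-- The closure of any set in a matroid is a flat. -/
lemma flat_closure {α : Type*} (M : Matroid α) (X : Set α) : M.IsFlat (M.closure X) := by
  rw [Matroid.closure_def]
  have hne : {F | M.IsFlat F ∧ X ∩ M.E ⊆ F}.Nonempty :=
    ⟨M.E, M.ground_isFlat, Set.inter_subset_right⟩
  haveI := hne.to_subtype
  rw [Set.sInter_eq_iInter]
  exact Matroid.IsFlat.iInter fun F => F.2.1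

end Helpers

/-- two realizations are linearly equivalent iff their slack matrices
differ by invertible column scalings. -/
theorem stmt5 {k : Type*} [Field k] {n d h : ℕ} (M : Matroid (Fin n))
    (hE : M.E = Set.univ) (hrk : HasRank M (d + 1))
    (H : Fin h → Set (Fin n)) (hH : HypEnum M d H)
    (V V' : Matrix (Fin (d + 1)) (Fin n) k)
    (hV : IsRealization M V) (hV' : IsRealization M V')
    (W W' : Matrix (Fin (d + 1)) (Fin h) k)
    (hW : IsNormalMatrix H V W) (hW' : IsNormalMatrix H V' W') :
    (∃ A : Matrix (Fin (d + 1)) (Fin (d + 1)) k, IsUnit A ∧ V' = A * V) ↔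
      ∃ dh : Fin h → kˣ,
        V'ᵀ * W' = (Vᵀ * W) * Matrix.diagonal (fun j => (dh j : k)) := by
  obtain ⟨B₀, hB₀, hB₀c⟩ := hrk
  constructor
  · rintro ⟨A, hA, hAV⟩
    have key : ∀ j : Fin h, ∃ c : kˣ, ∀ i,
        (V'ᵀ * W') i j = (Vᵀ * W) i j * (c : k) := by
      intro j
      obtain ⟨hFlat, I, hI, hIc⟩ := (hH.2 (H j)).1 ⟨j, rfl⟩
      obtain ⟨B, hB, hIB⟩ := hI.indep.exists_isBase_superset
      have hBc : B.ncard = d + 1 := by rw [hB.ncard_eq_ncard_of_isBase hB₀, hB₀c]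
      have hdiffc : (B \ I).ncard = 1 := by
        rw [Set.ncard_diff hIB (Set.toFinite I), hBc, hIc]
        omega
      obtain ⟨istar, hdiff⟩ := Set.ncard_eq_one.mp hdiffc
      have histar : istar ∈ B \ I := by rw [hdiff]; exact Set.mem_singleton istar
      have histarB : istar ∈ B := histar.1
      have histarI : istar ∉ I := histar.2
      have histarH : istar ∉ H j := by
        intro hmem
        exact histarI (hI.mem_of_insert_indep hmem
          (hB.indep.subset (Set.insert_subset histarB hIB)))
      have hBIU : B = I ∪ {istar} := by rw [← hdiff, Set.union_diff_cancel hIB]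
      haveI : Fintype ↥B := (Set.toFinite B).fintype
      have hcard : Fintype.card ↥B = d + 1 := by
        rw [← Nat.card_eq_fintype_card, Nat.card_coe_set_eq, hBc]
      let e : Fin (d + 1) ≃ ↥B := (Fintype.equivFinOfCardEq hcard).symm
      have hind : LinearIndependent k (fun i : ↥B => Vᵀ (i : Fin n)) := (hV B).1 hB.indep
      have hb : LinearIndependent k (fun s : Fin (d + 1) => Vᵀ ((e s : Fin n))) :=
        hind.comp e e.injective
      -- the vector `t = Aᵀ ·(column j of W')`
      set t : Fin (d + 1) → k := fun r => ∑ s, W' s j * A s r with htdef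
      have ht : ∀ i : Fin n, t ⬝ᵥ (fun r => V r i) = ∑ s, W' s j * V' s i := by
        intro i
        simp only [dotProduct, htdef, Finset.sum_mul, mul_assoc]
        rw [Finset.sum_comm]
        simp only [hAV, Matrix.mul_apply, Finset.mul_sum]
      set α : k := ∑ s, W' s j * V' s istar with hαdef
      set β : k := ∑ r, W r j * V r istar with hβdef
      have hα : α ≠ 0 := fun h0 => histarH ((hW' istar j).1 h0)
      have hβ : β ≠ 0 := fun h0 => histarH ((hW istar j).1 h0)
      set c : k := α * β⁻¹ with hcdef
      have hc : c ≠ 0 := mul_ne_zero hα (inv_ne_zero hβ)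
      have hxy : t = c • (fun r => W r j) := by
        apply pair_ext hb
        intro s
        have hsB : (e s : Fin n) ∈ I ∪ {istar} := by rw [← hBIU]; exact (e s).2
        have hdotW : ∀ i : Fin n, (c • fun r => W r j) ⬝ᵥ (fun r => V r i)
            = c * ∑ r, W r j * V r i := by
          intro i
          rw [smul_dotProduct]
          rfl
        rcases hsB with hsI | hsistar
        · have hsH : (e s : Fin n) ∈ H j := hI.subset hsI
          have h1 : t ⬝ᵥ Vᵀ ((e s : Fin n)) = 0 := by
            rw [show Vᵀ ((e s : Fin n)) = fun r => V r (e s : Fin n) from rfl, ht,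
              (hW' _ j).2 hsH]
          have h2 : (c • fun r => W r j) ⬝ᵥ Vᵀ ((e s : Fin n)) = 0 := by
            rw [show Vᵀ ((e s : Fin n)) = fun r => V r (e s : Fin n) from rfl, hdotW,
              (hW _ j).2 hsH, mul_zero]
          rw [h1, h2]
        · have hse : (e s : Fin n) = istar := hsistar
          have h1 : t ⬝ᵥ Vᵀ ((e s : Fin n)) = α := by
            rw [show Vᵀ ((e s : Fin n)) = fun r => V r (e s : Fin n) from rfl, ht, hse]
          have h2 : (c • fun r => W r j) ⬝ᵥ Vᵀ ((e s : Fin n)) = α := by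
            rw [show Vᵀ ((e s : Fin n)) = fun r => V r (e s : Fin n) from rfl, hdotW, hse,
              ← hβdef, hcdef]
            field_simp
          rw [h1, h2]
      refine ⟨Units.mk0 c hc, fun i => ?_⟩
      have lhs : (V'ᵀ * W') i j = t ⬝ᵥ (fun r => V r i) := by
        rw [ht]
        simp only [Matrix.mul_apply, Matrix.transpose_apply]
        exact Finset.sum_congr rfl fun r _ => mul_comm _ _
      have rhs : t ⬝ᵥ (fun r => V r i) = (Vᵀ * W) i j * c := by
        rw [hxy, smul_dotProduct]
        simp only [Matrix.mul_apply, Matrix.transpose_apply, smul_eq_mul, dotProduct]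
        rw [mul_comm]
        congr 1
        exact Finset.sum_congr rfl fun r _ => mul_comm _ _
      rw [lhs, rhs]
      rfl
    choose dh hdh using key
    refine ⟨dh, ?_⟩
    ext i j
    rw [Matrix.mul_diagonal]
    exact hdh j i
  · rintro ⟨dh, hS⟩
    haveI : Fintype ↥B₀ := (Set.toFinite B₀).fintype
    have hcard : Fintype.card ↥B₀ = d + 1 := by
      rw [← Nat.card_eq_fintype_card, Nat.card_coe_set_eq, hB₀c]
    let e : Fin (d + 1) ≃ ↥B₀ := (Fintype.equivFinOfCardEq hcard).symm
    have hsub : ∀ X : Set (Fin n), X ⊆ M.E := by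
      intro X; rw [hE]; exact Set.subset_univ _
    have hhyp : ∀ s : Fin (d + 1), ∃ j, H j = M.closure (B₀ \ {(e s : Fin n)}) := by
      intro s
      apply (hH.2 _).2
      refine ⟨flat_closure M _, B₀ \ {(e s : Fin n)}, ?_, ?_⟩
      · exact (hB₀.indep.subset Set.diff_subset).isBasis_closure
      · rw [Set.ncard_diff_singleton_of_mem (e s).2, hB₀c]
        omega
    choose jj hjj using hhyp
    have P1 : ∀ s s' : Fin (d + 1), s ≠ s' → ((e s' : Fin n) ∈ H (jj s)) := by
      intro s s' hne
      rw [hjj s]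
      refine M.subset_closure _ (hsub _) ⟨(e s').2, ?_⟩
      simp only [Set.mem_singleton_iff]
      intro hc
      exact hne (e.injective (Subtype.ext hc)).symm
    have P2 : ∀ s, (e s : Fin n) ∉ H (jj s) := by
      intro s; rw [hjj s]
      exact hB₀.indep.notMem_closure_diff_of_mem (e s).2
    set NM : Matrix (Fin (d + 1)) (Fin (d + 1)) k :=
      Matrix.of fun s r => W r (jj s) with hNMdef
    set NM' : Matrix (Fin (d + 1)) (Fin (d + 1)) k :=
      Matrix.of fun s r => W' r (jj s) with hNM'def
    have hUN : IsUnit NM := by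
      rw [← Matrix.linearIndependent_rows_iff_isUnit]
      exact rows_indep (v := fun s => fun r => V r (e s : Fin n))
        (fun s s' hne => (hW _ _).2 (P1 s s' hne))
        (fun s hz => P2 s ((hW _ _).1 hz))
    have hUN' : IsUnit NM' := by
      rw [← Matrix.linearIndependent_rows_iff_isUnit]
      exact rows_indep (v := fun s => fun r => V' r (e s : Fin n))
        (fun s s' hne => (hW' _ _).2 (P1 s s' hne))
        (fun s hz => P2 s ((hW' _ _).1 hz))
    have hdet' : IsUnit NM'.det := (Matrix.isUnit_iff_isUnit_det _).mp hUN'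
    set D : Matrix (Fin (d + 1)) (Fin (d + 1)) k :=
      Matrix.diagonal (fun s => (dh (jj s) : k)) with hDdef
    have hUD : IsUnit D := by
      rw [hDdef, Matrix.isUnit_iff_isUnit_det, Matrix.det_diagonal]
      exact isUnit_iff_ne_zero.mpr (Finset.prod_ne_zero_iff.mpr fun s _ => (dh (jj s)).ne_zero)
    set A : Matrix (Fin (d + 1)) (Fin (d + 1)) k := NM'⁻¹ * (D * NM) with hAdef
    have hUA : IsUnit A := (Matrix.isUnit_nonsing_inv_iff.mpr hUN').mul (hUD.mul hUN)
    refine ⟨A, hUA, ?_⟩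
    have hS' : ∀ i j, (V'ᵀ * W') i j = (Vᵀ * W) i j * (dh j : k) := by
      intro i j
      rw [hS, Matrix.mul_diagonal]
    have hNA : NM' * A = D * NM := by
      rw [hAdef, ← Matrix.mul_assoc, Matrix.mul_nonsing_inv _ hdet', Matrix.one_mul]
    have hkey : NM' * V' = NM' * (A * V) := by
      rw [← Matrix.mul_assoc, hNA]
      ext s i
      have hs := hS' i (jj s)
      simp only [Matrix.mul_apply, Matrix.transpose_apply] at hs ⊢
      rw [show (∑ r, NM' s r * V' r i) = ∑ r, V' r i * W' r (jj s) from
        Finset.sum_congr rfl fun r _ => mul_comm _ _, hs, Finset.sum_mul]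
      refine Finset.sum_congr rfl fun r _ => ?_
      have hD : (∑ x, Matrix.diagonal (fun s' => (dh (jj s') : k)) s x * NM x r)
          = (dh (jj s) : k) * W r (jj s) := by
        simp [Matrix.diagonal_apply, hNMdef]
      rw [hD]
      ring
    have := congrArg (fun X => NM'⁻¹ * X) hkey
    simpa only [← Matrix.mul_assoc, Matrix.nonsing_inv_mul _ hdet', Matrix.one_mul] using this
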